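/- For n ≥ 2 and any nonzero K, the linear map Φ = Ψ × id on ℝ^{2n} = ℝ⁴ × ℝ^{2n−4}, where Ψ(x₁,y₁,x₂,y₂) = (x₁, y₁ + ε x₂, −K⁻¹ x₂, −K y₂), satisfies Φ*ω₀ − ω₀ = ε dx₁ ∧ dx₂, (Φ⁻¹)*ω₀ − ω₀ = Kε dx₁ ∧ dx₂, and (Φᵀ)*ω₀ − ω₀ = −Kε dy₁ ∧ dy₂. In particular, the inverse of an ε-symplectic linear map need not be ε'-symplectic for any ε' depending only on ε. -/
import Mathlib


/-- The standard symplectic form `ω₀` on `ℝ^{2n}`, coordinates indexed by `Fin n × Fin 2`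
(`(j,0)` is `x_{j+1}`, `(j,1)` is `y_{j+1}`). -/
def omega0 (n : ℕ) (u v : Fin n × Fin 2 → ℝ) : ℝ :=
  ∑ j : Fin n, (u (j, 0) * v (j, 1) - u (j, 1) * v (j, 0))

/-- For `n ≥ 2`, `K ≠ 0` and the map `Φ = Ψ × id` with
`Ψ(x₁,y₁,x₂,y₂) = (x₁, y₁ + ε x₂, −K⁻¹ x₂, −K y₂)`: `Φinv` is the inverse of `Φ`, `Φt`
is its transpose, and `Φ*ω₀ − ω₀ = ε dx₁∧dx₂`, `(Φ⁻¹)*ω₀ − ω₀ = Kε dx₁∧dx₂`,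
`(Φᵀ)*ω₀ − ω₀ = −Kε dy₁∧dy₂`. -/
theorem inverse_transpose_eps_symplectic_example (n : ℕ) (hn : 2 ≤ n) (K ε : ℝ)
    (hK : K ≠ 0)
    (Φ Φinv Φt : (Fin n × Fin 2 → ℝ) → (Fin n × Fin 2 → ℝ))
    (hΦ : ∀ v p, Φ v p =
      if p = ((⟨0, by omega⟩ : Fin n), 0) then v ((⟨0, by omega⟩ : Fin n), 0)
      else if p = ((⟨0, by omega⟩ : Fin n), 1) then
        v ((⟨0, by omega⟩ : Fin n), 1) + ε * v ((⟨1, by omega⟩ : Fin n), 0)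
      else if p = ((⟨1, by omega⟩ : Fin n), 0) then -K⁻¹ * v ((⟨1, by omega⟩ : Fin n), 0)
      else if p = ((⟨1, by omega⟩ : Fin n), 1) then -K * v ((⟨1, by omega⟩ : Fin n), 1)
      else v p)
    (hΦinv : ∀ v p, Φinv v p =
      if p = ((⟨0, by omega⟩ : Fin n), 0) then v ((⟨0, by omega⟩ : Fin n), 0)
      else if p = ((⟨0, by omega⟩ : Fin n), 1) then
        v ((⟨0, by omega⟩ : Fin n), 1) + ε * K * v ((⟨1, by omega⟩ : Fin n), 0)
      else if p = ((⟨1, by omega⟩ : Fin n), 0) then -K * v ((⟨1, by omega⟩ : Fin n), 0)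
      else if p = ((⟨1, by omega⟩ : Fin n), 1) then -K⁻¹ * v ((⟨1, by omega⟩ : Fin n), 1)
      else v p)
    (hΦt : ∀ u p, Φt u p =
      if p = ((⟨0, by omega⟩ : Fin n), 0) then u ((⟨0, by omega⟩ : Fin n), 0)
      else if p = ((⟨0, by omega⟩ : Fin n), 1) then u ((⟨0, by omega⟩ : Fin n), 1)
      else if p = ((⟨1, by omega⟩ : Fin n), 0) then
        ε * u ((⟨0, by omega⟩ : Fin n), 1) - K⁻¹ * u ((⟨1, by omega⟩ : Fin n), 0)
      else if p = ((⟨1, by omega⟩ : Fin n), 1) then -K * u ((⟨1, by omega⟩ : Fin n), 1)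
      else u p) :
    (∀ v, Φ (Φinv v) = v ∧ Φinv (Φ v) = v) ∧
    (∀ u v, ∑ p : Fin n × Fin 2, Φt u p * v p = ∑ p : Fin n × Fin 2, u p * Φ v p) ∧
    (∀ u v, omega0 n (Φ u) (Φ v) - omega0 n u v =
      ε * (u ((⟨0, by omega⟩ : Fin n), 0) * v ((⟨1, by omega⟩ : Fin n), 0)
        - u ((⟨1, by omega⟩ : Fin n), 0) * v ((⟨0, by omega⟩ : Fin n), 0))) ∧
    (∀ u v, omega0 n (Φinv u) (Φinv v) - omega0 n u v =
      K * ε * (u ((⟨0, by omega⟩ : Fin n), 0) * v ((⟨1, by omega⟩ : Fin n), 0)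
        - u ((⟨1, by omega⟩ : Fin n), 0) * v ((⟨0, by omega⟩ : Fin n), 0))) ∧
    (∀ u v, omega0 n (Φt u) (Φt v) - omega0 n u v =
      -(K * ε) * (u ((⟨0, by omega⟩ : Fin n), 1) * v ((⟨1, by omega⟩ : Fin n), 1)
        - u ((⟨1, by omega⟩ : Fin n), 1) * v ((⟨0, by omega⟩ : Fin n), 1))) := by
  have h0 : (0:ℕ) < n := by omega
  have h1 : (1:ℕ) < n := by omega
  set i0 : Fin n := ⟨0, by omega⟩ with hi0
  set i1 : Fin n := ⟨1, by omega⟩ with hi1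
  have hne : i0 ≠ i1 := by simp [hi0, hi1, Fin.ext_iff]
  have n2 : ((i0, 1) : Fin n × Fin 2) ≠ (i0, 0) := by simp [Prod.ext_iff]
  have n3a : ((i1, 0) : Fin n × Fin 2) ≠ (i0, 0) := by simp [Prod.ext_iff, hne.symm]
  have n3b : ((i1, 0) : Fin n × Fin 2) ≠ (i0, 1) := by simp [Prod.ext_iff, hne.symm]
  have n4a : ((i1, 1) : Fin n × Fin 2) ≠ (i0, 0) := by simp [Prod.ext_iff, hne.symm]
  have n4b : ((i1, 1) : Fin n × Fin 2) ≠ (i0, 1) := by simp [Prod.ext_iff, hne.symm]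
  have n4c : ((i1, 1) : Fin n × Fin 2) ≠ (i1, 0) := by simp [Prod.ext_iff]
  -- evaluation lemmas for Φ
  have A1 : ∀ v, Φ v (i0, 0) = v (i0, 0) := fun v => by rw [hΦ, if_pos rfl]
  have A2 : ∀ v, Φ v (i0, 1) = v (i0, 1) + ε * v (i1, 0) := fun v => by
    rw [hΦ, if_neg n2, if_pos rfl]
  have A3 : ∀ v, Φ v (i1, 0) = -K⁻¹ * v (i1, 0) := fun v => by
    rw [hΦ, if_neg n3a, if_neg n3b, if_pos rfl]
  have A4 : ∀ v, Φ v (i1, 1) = -K * v (i1, 1) := fun v => by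
    rw [hΦ, if_neg n4a, if_neg n4b, if_neg n4c, if_pos rfl]
  have Ag : ∀ v (j : Fin n) (i : Fin 2), j ≠ i0 → j ≠ i1 → Φ v (j, i) = v (j, i) := by
    intro v j i hj0 hj1
    rw [hΦ, if_neg, if_neg, if_neg, if_neg] <;> simp [Prod.ext_iff, hj0, hj1]
  -- evaluation lemmas for Φinv
  have B1 : ∀ v, Φinv v (i0, 0) = v (i0, 0) := fun v => by rw [hΦinv, if_pos rfl]
  have B2 : ∀ v, Φinv v (i0, 1) = v (i0, 1) + ε * K * v (i1, 0) := fun v => by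
    rw [hΦinv, if_neg n2, if_pos rfl]
  have B3 : ∀ v, Φinv v (i1, 0) = -K * v (i1, 0) := fun v => by
    rw [hΦinv, if_neg n3a, if_neg n3b, if_pos rfl]
  have B4 : ∀ v, Φinv v (i1, 1) = -K⁻¹ * v (i1, 1) := fun v => by
    rw [hΦinv, if_neg n4a, if_neg n4b, if_neg n4c, if_pos rfl]
  have Bg : ∀ v (j : Fin n) (i : Fin 2), j ≠ i0 → j ≠ i1 → Φinv v (j, i) = v (j, i) := by
    intro v j i hj0 hj1
    rw [hΦinv, if_neg, if_neg, if_neg, if_neg] <;> simp [Prod.ext_iff, hj0, hj1]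
  -- evaluation lemmas for Φt
  have C1 : ∀ u, Φt u (i0, 0) = u (i0, 0) := fun u => by rw [hΦt, if_pos rfl]
  have C2 : ∀ u, Φt u (i0, 1) = u (i0, 1) := fun u => by rw [hΦt, if_neg n2, if_pos rfl]
  have C3 : ∀ u, Φt u (i1, 0) = ε * u (i0, 1) - K⁻¹ * u (i1, 0) := fun u => by
    rw [hΦt, if_neg n3a, if_neg n3b, if_pos rfl]
  have C4 : ∀ u, Φt u (i1, 1) = -K * u (i1, 1) := fun u => by
    rw [hΦt, if_neg n4a, if_neg n4b, if_neg n4c, if_pos rfl]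
  have Cg : ∀ u (j : Fin n) (i : Fin 2), j ≠ i0 → j ≠ i1 → Φt u (j, i) = u (j, i) := by
    intro u j i hj0 hj1
    rw [hΦt, if_neg, if_neg, if_neg, if_neg] <;> simp [Prod.ext_iff, hj0, hj1]
  have key : ∀ F G : Fin n → ℝ, (∀ j, j ≠ i0 → j ≠ i1 → F j = G j) →
      (∑ j, F j) - (∑ j, G j) = (F i0 - G i0) + (F i1 - G i1) := by
    intro F G h
    have e1 : (∑ j, F j) - (∑ j, G j) = ∑ j, (F j - G j) := by
      rw [Finset.sum_sub_distrib]
    rw [e1, ← Finset.sum_subset (Finset.subset_univ ({i0, i1} : Finset (Fin n)))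
      (by intro x _ hx; simp only [Finset.mem_insert, Finset.mem_singleton] at hx
          push_neg at hx
          rw [h x hx.1 hx.2]; ring),
      Finset.sum_pair hne]
  refine ⟨?_, ?_, ?_, ?_, ?_⟩
  · intro v
    constructor <;> funext p <;> obtain ⟨j, i⟩ := p <;>
        by_cases hj0 : j = i0 <;> by_cases hj1 : j = i1 <;>
      first
        | exact absurd (hj0.symm.trans hj1) hne
        | rw [Ag _ _ _ hj0 hj1, Bg _ _ _ hj0 hj1]
        | rw [Bg _ _ _ hj0 hj1, Ag _ _ _ hj0 hj1]
        | (subst hj0; fin_cases i <;>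
            simp only [Fin.mk_zero, Fin.mk_one, Fin.isValue, A1, A2, A3, A4, B1, B2, B3, B4] <;>
            field_simp <;> try ring)
        | (subst hj1; fin_cases i <;>
            simp only [Fin.mk_zero, Fin.mk_one, Fin.isValue, A1, A2, A3, A4, B1, B2, B3, B4] <;>
            field_simp <;> try ring)
  · intro u v
    have h : (∑ p : Fin n × Fin 2, Φt u p * v p) - (∑ p : Fin n × Fin 2, u p * Φ v p) = 0 := by
      rw [Fintype.sum_prod_type, Fintype.sum_prod_type,
        key (fun j => ∑ i : Fin 2, Φt u (j, i) * v (j, i))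
            (fun j => ∑ i : Fin 2, u (j, i) * Φ v (j, i))
            (fun j hj0 hj1 => by
              simp only [Fin.sum_univ_two, Ag _ _ _ hj0 hj1, Cg _ _ _ hj0 hj1])]
      simp only [Fin.sum_univ_two, A1, A2, A3, A4, C1, C2, C3, C4]
      ring
    linarith
  · intro u v
    unfold omega0
    rw [key _ _ (fun j hj0 hj1 => by rw [Ag _ _ _ hj0 hj1, Ag _ _ _ hj0 hj1,
        Ag _ _ _ hj0 hj1, Ag _ _ _ hj0 hj1])]
    simp only [A1, A2, A3, A4]
    field_simp
    ring
  · intro u v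
    unfold omega0
    rw [key _ _ (fun j hj0 hj1 => by rw [Bg _ _ _ hj0 hj1, Bg _ _ _ hj0 hj1,
        Bg _ _ _ hj0 hj1, Bg _ _ _ hj0 hj1])]
    simp only [B1, B2, B3, B4]
    field_simp
    ring
  · intro u v
    unfold omega0
    rw [key _ _ (fun j hj0 hj1 => by rw [Cg _ _ _ hj0 hj1, Cg _ _ _ hj0 hj1,
        Cg _ _ _ hj0 hj1, Cg _ _ _ hj0 hj1])]
    simp only [C1, C2, C3, C4]
    field_simp
    ring
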